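/- Let I be a monomial ideal with maximal generator degree d in K[x,y,z], for d ≥ 4: I = (x^d, x^{d-1}y, xy^{d-1}, y^d, x^2 y^{d-2} z). Then for n ≥ d-2, I^n : (x,y,z)^∞ = I^n, i.e., I^n is saturated with respect to the maximal ideal (x,y,z). -/

import Mathlib

open MvPolynomial

/-- Numeric core: for `n ≥ d-2`, any `M ≤ d*n` is a sum of `n` parts from `{0,1,d-1,d}`. -/
lemma sat_numA (d n M : ℕ) (hd : 2 ≤ d) (hn : d - 2 ≤ n) (hM : M ≤ d * n) :
    ∃ b1 b2 b3 b4 : ℕ, b1 + b2 + b3 + b4 = n ∧ d * b1 + (d - 1) * b2 + b3 = M := by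
  set q := M / d with hqdef
  set r := M % d with hrdef
  have hdr : d * q + r = M := Nat.div_add_mod M d
  have hr : r < d := Nat.mod_lt _ (by omega)
  by_cases hc : q + r ≤ n
  · refine ⟨q, 0, r, n - q - r, by omega, by simpa using hdr⟩
  · push_neg at hc
    have hq : q ≤ n := by
      have h1 : d * q ≤ d * n := by omega
      exact Nat.le_of_mul_le_mul_left h1 (by omega)
    have hq1 : q + 1 ≤ n := by
      rcases lt_or_eq_of_le hq with h | h
      · omega
      · have : d * q = d * n := by rw [h]
        omega
    refine ⟨q + r + 1 - d, d - r, 0, n - q - 1, by omega, ?_⟩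
    zify [show d ≤ q + r + 1 by omega, show r ≤ d by omega, show 1 ≤ d by omega]
    have hdr' : (d : ℤ) * q + r = M := by exact_mod_cast hdr
    linear_combination hdr'

namespace SatAux

noncomputable section

variable (d : ℕ)

def e1 : Fin 3 →₀ ℕ := Finsupp.single 0 d
def e2 : Fin 3 →₀ ℕ := Finsupp.single 0 (d - 1) + Finsupp.single 1 1
def e3 : Fin 3 →₀ ℕ := Finsupp.single 0 1 + Finsupp.single 1 (d - 1)
def e4 : Fin 3 →₀ ℕ := Finsupp.single 1 d
def e5 : Fin 3 →₀ ℕ :=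
  Finsupp.single 0 2 + Finsupp.single 1 (d - 2) + Finsupp.single 2 1

/-- Exponent vectors of the natural generators of `I^n`. -/
def SS (n : ℕ) : Set (Fin 3 →₀ ℕ) :=
  {s | ∃ B1 B2 B3 B4 B5 : ℕ, B1 + B2 + B3 + B4 + B5 = n ∧
    s = B1 • e1 d + B2 • e2 d + B3 • e3 d + B4 • e4 d + B5 • e5 d}

lemma e1_apply (i : Fin 3) : e1 d i = if i = 0 then d else 0 := by
  fin_cases i <;> simp [e1, Finsupp.single_apply]

lemma e2_apply (i : Fin 3) : e2 d i = if i = 0 then d - 1 else if i = 1 then 1 else 0 := by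
  fin_cases i <;> simp [e2, Finsupp.single_apply]

lemma e3_apply (i : Fin 3) : e3 d i = if i = 0 then 1 else if i = 1 then d - 1 else 0 := by
  fin_cases i <;> simp [e3, Finsupp.single_apply]

lemma e4_apply (i : Fin 3) : e4 d i = if i = 1 then d else 0 := by
  fin_cases i <;> simp [e4, Finsupp.single_apply]

lemma e5_apply (i : Fin 3) : e5 d i = if i = 0 then 2 else if i = 1 then d - 2 else 1 := by
  fin_cases i <;> simp [e5, Finsupp.single_apply]

end
end SatAux

namespace SatAux

noncomputable section

variable (d : ℕ)

lemma SS_add_mem {n : ℕ} {s g : Fin 3 →₀ ℕ} (hs : s ∈ SS d n)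
    (hg : g ∈ ({e1 d, e2 d, e3 d, e4 d, e5 d} : Set (Fin 3 →₀ ℕ))) :
    s + g ∈ SS d (n + 1) := by
  obtain ⟨B1, B2, B3, B4, B5, hsum, rfl⟩ := hs
  rcases hg with rfl | rfl | rfl | rfl | rfl
  · exact ⟨B1 + 1, B2, B3, B4, B5, by omega, by rw [succ_nsmul]; abel⟩
  · exact ⟨B1, B2 + 1, B3, B4, B5, by omega, by rw [succ_nsmul]; abel⟩
  · exact ⟨B1, B2, B3 + 1, B4, B5, by omega, by rw [succ_nsmul]; abel⟩
  · exact ⟨B1, B2, B3, B4 + 1, B5, by omega, by rw [succ_nsmul]; abel⟩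
  · exact ⟨B1, B2, B3, B4, B5 + 1, by omega, by rw [succ_nsmul]; abel⟩

lemma SS_succ {n : ℕ} {s : Fin 3 →₀ ℕ} (hs : s ∈ SS d (n + 1)) :
    ∃ t ∈ SS d n, ∃ g ∈ ({e1 d, e2 d, e3 d, e4 d, e5 d} : Set (Fin 3 →₀ ℕ)), t + g = s := by
  obtain ⟨B1, B2, B3, B4, B5, hsum, rfl⟩ := hs
  by_cases h1 : 0 < B1
  · obtain ⟨C, rfl⟩ : ∃ C, B1 = C + 1 := ⟨B1 - 1, by omega⟩
    exact ⟨C • e1 d + B2 • e2 d + B3 • e3 d + B4 • e4 d + B5 • e5 d,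
      ⟨C, B2, B3, B4, B5, by omega, rfl⟩, e1 d, by simp,
      by rw [succ_nsmul]; abel⟩
  by_cases h2 : 0 < B2
  · obtain ⟨C, rfl⟩ : ∃ C, B2 = C + 1 := ⟨B2 - 1, by omega⟩
    exact ⟨B1 • e1 d + C • e2 d + B3 • e3 d + B4 • e4 d + B5 • e5 d,
      ⟨B1, C, B3, B4, B5, by omega, rfl⟩, e2 d, by simp,
      by rw [succ_nsmul]; abel⟩
  by_cases h3 : 0 < B3
  · obtain ⟨C, rfl⟩ : ∃ C, B3 = C + 1 := ⟨B3 - 1, by omega⟩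
    exact ⟨B1 • e1 d + B2 • e2 d + C • e3 d + B4 • e4 d + B5 • e5 d,
      ⟨B1, B2, C, B4, B5, by omega, rfl⟩, e3 d, by simp,
      by rw [succ_nsmul]; abel⟩
  by_cases h4 : 0 < B4
  · obtain ⟨C, rfl⟩ : ∃ C, B4 = C + 1 := ⟨B4 - 1, by omega⟩
    exact ⟨B1 • e1 d + B2 • e2 d + B3 • e3 d + C • e4 d + B5 • e5 d,
      ⟨B1, B2, B3, C, B5, by omega, rfl⟩, e4 d, by simp,
      by rw [succ_nsmul]; abel⟩
  have h5 : 0 < B5 := by omega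
  obtain ⟨C, rfl⟩ : ∃ C, B5 = C + 1 := ⟨B5 - 1, by omega⟩
  exact ⟨B1 • e1 d + B2 • e2 d + B3 • e3 d + B4 • e4 d + C • e5 d,
    ⟨B1, B2, B3, B4, C, by omega, rfl⟩, e5 d, by simp,
    by rw [succ_nsmul]; abel⟩

variable {K : Type*} [Field K]

lemma pow_span (n : ℕ) :
    (Ideal.span ((fun s => monomial s (1 : K)) '' {e1 d, e2 d, e3 d, e4 d, e5 d})) ^ n =
      Ideal.span ((fun s => monomial s (1 : K)) '' SS d n) := by
  induction n with
  | zero =>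
    have hS : SS d 0 = {0} := by
      ext s
      constructor
      · rintro ⟨B1, B2, B3, B4, B5, hsum, rfl⟩
        obtain ⟨rfl, rfl, rfl, rfl, rfl⟩ : B1 = 0 ∧ B2 = 0 ∧ B3 = 0 ∧ B4 = 0 ∧ B5 = 0 := by omega
        simp
      · rintro rfl
        exact ⟨0, 0, 0, 0, 0, rfl, by simp⟩
    rw [pow_zero, hS]
    simp [Ideal.one_eq_top, Set.image_singleton, monomial_zero']
  | succ n ih =>
    rw [pow_succ, ih, Ideal.span_mul_span']
    congr 1
    ext p
    constructor
    · rintro ⟨-, ⟨s, hs, rfl⟩, -, ⟨g, hg, rfl⟩, rfl⟩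
      exact ⟨s + g, SS_add_mem d hs hg, by simp [monomial_mul]⟩
    · rintro ⟨s', hs', rfl⟩
      obtain ⟨t, ht, g, hg, rfl⟩ := SS_succ d hs'
      exact ⟨_, ⟨t, ht, rfl⟩, _, ⟨g, hg, rfl⟩, by simp [monomial_mul]⟩

end

end SatAux

namespace SatAux

noncomputable section

variable (d : ℕ)

lemma comb_apply (C1 C2 C3 C4 C5 : ℕ) :
    (C1 • e1 d + C2 • e2 d + C3 • e3 d + C4 • e4 d + C5 • e5 d) 0
        = C1 * d + C2 * (d - 1) + C3 + C5 * 2 ∧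
      (C1 • e1 d + C2 • e2 d + C3 • e3 d + C4 • e4 d + C5 • e5 d) 1
        = C2 + C3 * (d - 1) + C4 * d + C5 * (d - 2) ∧
      (C1 • e1 d + C2 • e2 d + C3 • e3 d + C4 • e4 d + C5 • e5 d) 2 = C5 := by
  refine ⟨?_, ?_, ?_⟩ <;>
    simp [e1, e2, e3, e4, e5, Finsupp.single_apply, mul_comm] <;> ring

lemma SS_z_free (hd : 4 ≤ d) {n : ℕ} (hn : d - 2 ≤ n) {s : Fin 3 →₀ ℕ} (hs : s ∈ SS d n) :
    ∃ s' ∈ SS d n, s' 0 = s 0 ∧ s' 1 = s 1 ∧ s' 2 = 0 := by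
  obtain ⟨B1, B2, B3, B4, B5, hsum, rfl⟩ := hs
  obtain ⟨hB0, hB1, hB2⟩ := comb_apply d B1 B2 B3 B4 B5
  have hsum' : (B1 : ℤ) + B2 + B3 + B4 + B5 = n := by exact_mod_cast hsum
  have h01 : (B1 • e1 d + B2 • e2 d + B3 • e3 d + B4 • e4 d + B5 • e5 d) 0 +
      (B1 • e1 d + B2 • e2 d + B3 • e3 d + B4 • e4 d + B5 • e5 d) 1 = d * n := by
    rw [hB0, hB1]
    zify [show 1 ≤ d by omega, show 2 ≤ d by omega]
    linear_combination (d : ℤ) * hsum'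
  have hM : (B1 • e1 d + B2 • e2 d + B3 • e3 d + B4 • e4 d + B5 • e5 d) 0 ≤ d * n :=
    h01 ▸ Nat.le_add_right _ _
  obtain ⟨b1, b2, b3, b4, hb, hw⟩ := sat_numA d n _ (by omega) hn hM
  obtain ⟨hb0, hb1, hb2⟩ := comb_apply d b1 b2 b3 b4 0
  have hb01 : (b1 • e1 d + b2 • e2 d + b3 • e3 d + b4 • e4 d + 0 • e5 d) 0 +
      (b1 • e1 d + b2 • e2 d + b3 • e3 d + b4 • e4 d + 0 • e5 d) 1 = d * n := by
    rw [hb0, hb1]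
    have hb' : (b1 : ℤ) + b2 + b3 + b4 + 0 = n := by exact_mod_cast hb
    zify [show 1 ≤ d by omega, show 2 ≤ d by omega]
    linear_combination (d : ℤ) * hb'
  have h0eq : (b1 • e1 d + b2 • e2 d + b3 • e3 d + b4 • e4 d + 0 • e5 d) 0 =
      (B1 • e1 d + B2 • e2 d + B3 • e3 d + B4 • e4 d + B5 • e5 d) 0 := by
    rw [hb0, hB0] at *
    rw [← hw]; ring
  refine ⟨b1 • e1 d + b2 • e2 d + b3 • e3 d + b4 • e4 d + 0 • e5 d,
    ⟨b1, b2, b3, b4, 0, by omega, rfl⟩, h0eq, by omega, hb2⟩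

variable {K : Type*} [Field K]

lemma step (hd : 4 ≤ d) {n : ℕ} (hn : d - 2 ≤ n) (f : MvPolynomial (Fin 3) K)
    (hf : f * X 2 ∈ Ideal.span ((fun s => monomial s (1 : K)) '' SS d n)) :
    f ∈ Ideal.span ((fun s => monomial s (1 : K)) '' SS d n) := by
  rw [mem_ideal_span_monomial_image] at hf ⊢
  intro m hm
  have hm' : m + Finsupp.single 2 1 ∈ (f * X 2).support := by
    rw [support_mul_X]
    simp only [Finset.mem_map, addRightEmbedding_apply]
    exact ⟨m, hm, rfl⟩
  obtain ⟨s, hsS, hsle⟩ := hf _ hm'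
  obtain ⟨s', hs'S, h0, h1, h2⟩ := SS_z_free d hd hn hsS
  refine ⟨s', hs'S, ?_⟩
  rw [Finsupp.le_def] at hsle ⊢
  intro i
  fin_cases i
  · have := hsle 0
    simp [Finsupp.single_apply] at this
    simpa [h0] using this
  · have := hsle 1
    simp [Finsupp.single_apply] at this
    simpa [h1] using this
  · simp [h2]

lemma stepk (hd : 4 ≤ d) {n : ℕ} (hn : d - 2 ≤ n) :
    ∀ (k : ℕ) (f : MvPolynomial (Fin 3) K),
      f * X 2 ^ k ∈ Ideal.span ((fun s => monomial s (1 : K)) '' SS d n) →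
        f ∈ Ideal.span ((fun s => monomial s (1 : K)) '' SS d n) := by
  intro k
  induction k with
  | zero => intro f h; simpa using h
  | succ k ih =>
    intro f h
    refine ih f (step d hd hn _ ?_)
    rw [mul_assoc, ← pow_succ]
    exact h

end

end SatAux


open SatAux in
/-- For `d ≥ 4` and `I = (x^d, x^{d-1}y, xy^{d-1}, y^d, x²y^{d-2}z)` in `K[x,y,z]`,
`I^n` is saturated with respect to `(x,y,z)` for all `n ≥ d-2`:
`I^n : (x,y,z)^∞ = I^n`. -/
theorem stmt_13 {K : Type*} [Field K] (d : ℕ) (hd : 4 ≤ d) (n : ℕ) (hn : d - 2 ≤ n) :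
    (⨆ k : ℕ,
        Submodule.colon
          ((Ideal.span {(X 0 : MvPolynomial (Fin 3) K) ^ d,
              X 0 ^ (d - 1) * X 1, X 0 * X 1 ^ (d - 1), X 1 ^ d,
              X 0 ^ 2 * X 1 ^ (d - 2) * X 2}) ^ n)
          (((Ideal.span {(X 0 : MvPolynomial (Fin 3) K), X 1, X 2}) ^ k :
            Ideal (MvPolynomial (Fin 3) K)) : Set (MvPolynomial (Fin 3) K))) =
      (Ideal.span {(X 0 : MvPolynomial (Fin 3) K) ^ d,
          X 0 ^ (d - 1) * X 1, X 0 * X 1 ^ (d - 1), X 1 ^ d,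
          X 0 ^ 2 * X 1 ^ (d - 2) * X 2}) ^ n := by
  have hgen : ({(X 0 : MvPolynomial (Fin 3) K) ^ d, X 0 ^ (d - 1) * X 1, X 0 * X 1 ^ (d - 1),
      X 1 ^ d, X 0 ^ 2 * X 1 ^ (d - 2) * X 2} : Set (MvPolynomial (Fin 3) K)) =
      (fun s => monomial s (1 : K)) '' {e1 d, e2 d, e3 d, e4 d, e5 d} := by
    have h1 : (X 0 : MvPolynomial (Fin 3) K) ^ d = monomial (e1 d) 1 := by
      rw [e1, X_pow_eq_monomial]
    have h2 : (X 0 : MvPolynomial (Fin 3) K) ^ (d - 1) * X 1 = monomial (e2 d) 1 := by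
      rw [e2, show (X 1 : MvPolynomial (Fin 3) K) = X 1 ^ 1 from (pow_one _).symm,
        X_pow_eq_monomial, X_pow_eq_monomial, monomial_mul, one_mul]
    have h3 : (X 0 : MvPolynomial (Fin 3) K) * X 1 ^ (d - 1) = monomial (e3 d) 1 := by
      rw [e3, show (X 0 : MvPolynomial (Fin 3) K) = X 0 ^ 1 from (pow_one _).symm,
        X_pow_eq_monomial, X_pow_eq_monomial, monomial_mul, one_mul]
    have h4 : (X 1 : MvPolynomial (Fin 3) K) ^ d = monomial (e4 d) 1 := by
      rw [e4, X_pow_eq_monomial]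
    have h5 : (X 0 : MvPolynomial (Fin 3) K) ^ 2 * X 1 ^ (d - 2) * X 2 = monomial (e5 d) 1 := by
      rw [e5, show (X 2 : MvPolynomial (Fin 3) K) = X 2 ^ 1 from (pow_one _).symm,
        X_pow_eq_monomial, X_pow_eq_monomial, X_pow_eq_monomial, monomial_mul, monomial_mul,
        one_mul, one_mul]
    rw [h1, h2, h3, h4, h5]
    simp [Set.image_insert_eq]
  have hIpow : (Ideal.span {(X 0 : MvPolynomial (Fin 3) K) ^ d, X 0 ^ (d - 1) * X 1,
      X 0 * X 1 ^ (d - 1), X 1 ^ d, X 0 ^ 2 * X 1 ^ (d - 2) * X 2}) ^ n =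
      Ideal.span ((fun s => monomial s (1 : K)) '' SS d n) := by
    rw [hgen, pow_span]
  apply le_antisymm
  · refine iSup_le fun k => ?_
    intro f hf
    rw [Submodule.mem_colon] at hf
    have hX : (X 2 : MvPolynomial (Fin 3) K) ^ k ∈
        (Ideal.span {(X 0 : MvPolynomial (Fin 3) K), X 1, X 2}) ^ k :=
      Ideal.pow_mem_pow (Ideal.subset_span (by simp)) k
    have hfz := hf _ hX
    rw [smul_eq_mul] at hfz
    rw [hIpow] at hfz ⊢
    exact stepk d hd hn k f hfz
  · refine le_trans ?_ (le_iSup _ 0)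
    intro f hf
    rw [Submodule.mem_colon]
    intro p _
    rw [smul_eq_mul]
    exact Ideal.mul_mem_right p _ hf
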